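/- Let (e_n) be a sequence in a real Banach space X with ‖e_n‖ → 1, let c, s ≥ 0 be reals not both zero, and suppose there exists a real number L such that for every ε > 0 there exists a positive integer ν with |‖c·e_i + s·e_j‖ − L| ≤ ε for all integers ν ≤ i < j. Then L ≥ max{ c(c+s)/(c+2s), s(c+s)/(2c+s) }. -/

import Mathlib

open Set Real Filter

/-- **Proposition (lower estimate for the Brunel–Sucheston limit `L(c,s)`).**
If `‖e_n‖ → 1`, `c, s ≥ 0` are not both zero, and `‖c • e_i + s • e_j‖ → L` as
`i < j` tend to infinity, then `L ≥ max{c(c+s)/(c+2s), s(c+s)/(2c+s)}`. -/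
theorem BS_limit_lower_bound
    (X : Type*) [NormedAddCommGroup X] [NormedSpace ℝ X] [CompleteSpace X]
    (e : ℕ → X)
    (hnorm : Tendsto (fun n => ‖e n‖) atTop (nhds 1))
    (c s : ℝ) (hc : 0 ≤ c) (hs : 0 ≤ s) (hcs : ¬(c = 0 ∧ s = 0))
    (L : ℝ)
    (hL : ∀ ε : ℝ, 0 < ε → ∃ ν : ℕ, 0 < ν ∧
      ∀ i j : ℕ, ν ≤ i → i < j → |‖c • e i + s • e j‖ - L| ≤ ε) :
    max (c * (c + s) / (c + 2 * s)) (s * (c + s) / (2 * c + s)) ≤ L := by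
  have hpos1 : 0 < c + 2 * s := by
    rcases lt_or_eq_of_le hc with h | h
    · linarith
    · rcases lt_or_eq_of_le hs with h' | h'
      · linarith
      · exact absurd ⟨h.symm, h'.symm⟩ hcs
  have hpos2 : 0 < 2 * c + s := by
    rcases lt_or_eq_of_le hc with h | h
    · linarith
    · rcases lt_or_eq_of_le hs with h' | h'
      · linarith
      · exact absurd ⟨h.symm, h'.symm⟩ hcs
  -- main finite-ε estimates
  have key : ∀ ε : ℝ, 0 < ε → ε < 1 →
      c * (c + s) * (1 - ε) ≤ (c + 2 * s) * (L + ε) ∧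
      s * (c + s) * (1 - ε) ≤ (2 * c + s) * (L + ε) := by
    intro ε hε hε1
    obtain ⟨ν, hν, hbound⟩ := hL ε hε
    have hnorm' : ∀ᶠ n in atTop, 1 - ε ≤ ‖e n‖ := by
      rw [Metric.tendsto_atTop] at hnorm
      obtain ⟨N, hN⟩ := hnorm ε hε
      filter_upwards [eventually_ge_atTop N] with n hn
      have := hN n hn
      rw [Real.dist_eq, abs_lt] at this
      linarith [this.1]
    obtain ⟨N, hN⟩ := eventually_atTop.mp hnorm'
    set i := max ν N with hi
    set j := i + 1 with hj
    set k := i + 2 with hk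
    have hiν : ν ≤ i := le_max_left _ _
    have hiN : N ≤ i := le_max_right _ _
    have b1 : ‖c • e i + s • e j‖ ≤ L + ε := by
      have := hbound i j hiν (by omega)
      rw [abs_le] at this; linarith [this.2]
    have b2 : ‖c • e i + s • e k‖ ≤ L + ε := by
      have := hbound i k hiν (by omega)
      rw [abs_le] at this; linarith [this.2]
    have b3 : ‖c • e j + s • e k‖ ≤ L + ε := by
      have := hbound j k (by omega) (by omega)
      rw [abs_le] at this; linarith [this.2]
    have hLε : 0 ≤ L + ε := by
      have := hbound i j hiν (by omega)
      rw [abs_le] at this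
      have := norm_nonneg (c • e i + s • e j)
      linarith
    have hei : 1 - ε ≤ ‖e i‖ := hN i hiN
    have hek : 1 - ε ≤ ‖e k‖ := hN k (by omega)
    constructor
    · -- c-bound
      have id1 : (c * (c + s)) • e i =
          c • (c • e i + s • e j) + s • (c • e i + s • e k) - s • (c • e j + s • e k) := by
        module
      have h1 : c * (c + s) * ‖e i‖ ≤ (c + 2 * s) * (L + ε) := by
        have hn1 : ‖(c * (c + s)) • e i‖ = c * (c + s) * ‖e i‖ := by
          rw [norm_smul, Real.norm_eq_abs, abs_of_nonneg (by positivity)]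
        have htri : ‖(c * (c + s)) • e i‖ ≤
            c * ‖c • e i + s • e j‖ + s * ‖c • e i + s • e k‖ + s * ‖c • e j + s • e k‖ := by
          rw [id1]
          calc ‖c • (c • e i + s • e j) + s • (c • e i + s • e k) - s • (c • e j + s • e k)‖
              ≤ ‖c • (c • e i + s • e j) + s • (c • e i + s • e k)‖ + ‖s • (c • e j + s • e k)‖ :=
                norm_sub_le _ _
            _ ≤ ‖c • (c • e i + s • e j)‖ + ‖s • (c • e i + s • e k)‖ + ‖s • (c • e j + s • e k)‖ := by
                linarith [norm_add_le (c • (c • e i + s • e j)) (s • (c • e i + s • e k))]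
            _ = c * ‖c • e i + s • e j‖ + s * ‖c • e i + s • e k‖ + s * ‖c • e j + s • e k‖ := by
                rw [norm_smul, norm_smul, norm_smul, Real.norm_eq_abs, Real.norm_eq_abs,
                  abs_of_nonneg hc, abs_of_nonneg hs]
        rw [hn1] at htri
        nlinarith [mul_le_mul_of_nonneg_left b1 hc, mul_le_mul_of_nonneg_left b2 hs,
          mul_le_mul_of_nonneg_left b3 hs]
      calc c * (c + s) * (1 - ε) ≤ c * (c + s) * ‖e i‖ :=
            mul_le_mul_of_nonneg_left hei (by positivity)
        _ ≤ (c + 2 * s) * (L + ε) := h1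
    · -- s-bound
      rcases eq_or_lt_of_le hs with hs0 | hs0
      · rw [← hs0]
        simp
        positivity
      · have id2 : (s * s * (c + s)) • e k =
            (c * s) • (c • e i + s • e k) + (s * s) • (c • e j + s • e k)
              - (c * s) • (c • e i + s • e j) := by
          module
        have h1 : s * s * (c + s) * ‖e k‖ ≤ s * ((2 * c + s) * (L + ε)) := by
          have hn1 : ‖(s * s * (c + s)) • e k‖ = s * s * (c + s) * ‖e k‖ := by
            rw [norm_smul, Real.norm_eq_abs, abs_of_nonneg (by positivity)]
          have htri : ‖(s * s * (c + s)) • e k‖ ≤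
              (c * s) * ‖c • e i + s • e k‖ + (s * s) * ‖c • e j + s • e k‖
                + (c * s) * ‖c • e i + s • e j‖ := by
            rw [id2]
            calc ‖(c * s) • (c • e i + s • e k) + (s * s) • (c • e j + s • e k)
                  - (c * s) • (c • e i + s • e j)‖
                ≤ ‖(c * s) • (c • e i + s • e k) + (s * s) • (c • e j + s • e k)‖
                  + ‖(c * s) • (c • e i + s • e j)‖ := norm_sub_le _ _
              _ ≤ ‖(c * s) • (c • e i + s • e k)‖ + ‖(s * s) • (c • e j + s • e k)‖
                  + ‖(c * s) • (c • e i + s • e j)‖ := by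
                  linarith [norm_add_le ((c * s) • (c • e i + s • e k)) ((s * s) • (c • e j + s • e k))]
              _ = (c * s) * ‖c • e i + s • e k‖ + (s * s) * ‖c • e j + s • e k‖
                  + (c * s) * ‖c • e i + s • e j‖ := by
                  rw [norm_smul, norm_smul, norm_smul, Real.norm_eq_abs, Real.norm_eq_abs,
                    abs_of_nonneg (by positivity : (0:ℝ) ≤ c * s),
                    abs_of_nonneg (by positivity : (0:ℝ) ≤ s * s)]
          rw [hn1] at htri
          nlinarith [mul_le_mul_of_nonneg_left b2 (by positivity : (0:ℝ) ≤ c * s),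
            mul_le_mul_of_nonneg_left b3 (by positivity : (0:ℝ) ≤ s * s),
            mul_le_mul_of_nonneg_left b1 (by positivity : (0:ℝ) ≤ c * s)]
        have h2 : s * s * (c + s) * (1 - ε) ≤ s * ((2 * c + s) * (L + ε)) := by
          calc s * s * (c + s) * (1 - ε) ≤ s * s * (c + s) * ‖e k‖ :=
                mul_le_mul_of_nonneg_left hek (by positivity)
            _ ≤ s * ((2 * c + s) * (L + ε)) := h1
        have := (mul_le_mul_iff_right₀ hs0).mp (by nlinarith : s * (s * (c + s) * (1 - ε)) ≤ s * ((2 * c + s) * (L + ε)))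
        linarith
  -- pass to the limit ε → 0
  have limc : c * (c + s) ≤ (c + 2 * s) * L := by
    apply le_of_forall_pos_le_add
    intro δ hδ
    set K : ℝ := c + 2 * s + c * (c + s) + 1 with hK
    have hKpos : 0 < K := by positivity
    set ε : ℝ := min (δ / K) (1 / 2) with hεdef
    have hε : 0 < ε := lt_min (by positivity) (by norm_num)
    have hε1 : ε < 1 := lt_of_le_of_lt (min_le_right _ _) (by norm_num)
    have hεδ : ε ≤ δ / K := min_le_left _ _
    have h := (key ε hε hε1).1
    have hεK : K * ε ≤ δ := by
      rw [mul_comm]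
      calc ε * K ≤ (δ / K) * K := mul_le_mul_of_nonneg_right hεδ hKpos.le
        _ = δ := div_mul_cancel₀ _ hKpos.ne'
    nlinarith [hε.le]
  have lims : s * (c + s) ≤ (2 * c + s) * L := by
    apply le_of_forall_pos_le_add
    intro δ hδ
    set K : ℝ := 2 * c + s + s * (c + s) + 1 with hK
    have hKpos : 0 < K := by positivity
    set ε : ℝ := min (δ / K) (1 / 2) with hεdef
    have hε : 0 < ε := lt_min (by positivity) (by norm_num)
    have hε1 : ε < 1 := lt_of_le_of_lt (min_le_right _ _) (by norm_num)
    have hεδ : ε ≤ δ / K := min_le_left _ _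
    have h := (key ε hε hε1).2
    have hεK : K * ε ≤ δ := by
      rw [mul_comm]
      calc ε * K ≤ (δ / K) * K := mul_le_mul_of_nonneg_right hεδ hKpos.le
        _ = δ := div_mul_cancel₀ _ hKpos.ne'
    nlinarith [hε.le]
  apply max_le
  · rw [div_le_iff₀ hpos1]; linarith
  · rw [div_le_iff₀ hpos2]; linarith
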